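/- Let t ∈ [0,1), let δ > 0, and let p̂ be a design measure on the design points x_1, …, x_n ∈ ℝ^q with H(p̂) invertible. If ψ_{Di}(p̂) − q ≤ δ for every i with 1 ≤ i ≤ n, then log det H(p̂) ≥ log det H(p) − δ for every design measure p with H(p) invertible. -/

import Mathlib

open Matrix BigOperators Finset

noncomputable section

/-- A design measure: nonnegative masses summing to 1. -/
def designMeasure {n : ℕ} (p : Fin n → ℝ) : Prop :=
  (∀ i, 0 ≤ p i) ∧ ∑ i, p i = 1

/-- G(p) = Σ pᵢ xᵢ xᵢᵀ. -/
def Gmat {q n : ℕ} (x : Fin n → Fin q → ℝ) (p : Fin n → ℝ) : Matrix (Fin q) (Fin q) ℝ :=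
  ∑ i, p i • Matrix.vecMulVec (x i) (x i)

/-- g(p) = Σ pᵢ xᵢ. -/
def gvec {q n : ℕ} (x : Fin n → Fin q → ℝ) (p : Fin n → ℝ) : Fin q → ℝ :=
  ∑ i, p i • x i

/-- H(p) = G(p) − t g(p) g(p)ᵀ. -/
def Hmat {q n : ℕ} (t : ℝ) (x : Fin n → Fin q → ℝ) (p : Fin n → ℝ) : Matrix (Fin q) (Fin q) ℝ :=
  Gmat x p - t • Matrix.vecMulVec (gvec x p) (gvec x p)

/-- ψ_{Di}(p). -/
def psiD {q n : ℕ} (t : ℝ) (x : Fin n → Fin q → ℝ) (p : Fin n → ℝ) (i : Fin n) : ℝ :=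
  (1 - t) * (x i ⬝ᵥ ((Hmat t x p)⁻¹ *ᵥ x i))
    + t * ((x i - gvec x p) ⬝ᵥ ((Hmat t x p)⁻¹ *ᵥ (x i - gvec x p)))

/-- ψ_{Ai}(p). -/
def psiA {q n : ℕ} (t : ℝ) (x : Fin n → Fin q → ℝ) (p : Fin n → ℝ) (i : Fin n) : ℝ :=
  (1 - t) * (x i ⬝ᵥ (((Hmat t x p)⁻¹ * (Hmat t x p)⁻¹) *ᵥ x i))
    + t * ((x i - gvec x p) ⬝ᵥ (((Hmat t x p)⁻¹ * (Hmat t x p)⁻¹) *ᵥ (x i - gvec x p)))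


section Helpers

set_option linter.unusedSectionVars false
variable {m : Type*} [Fintype m] [DecidableEq m]

lemma aux_trace_eq_sum_eigenvalues {A : Matrix m m ℝ} (hA : A.IsHermitian) :
    A.trace = ∑ i, hA.eigenvalues i := by
  conv_lhs => rw [hA.spectral_theorem]
  rw [Unitary.conjStarAlgAut_apply, Matrix.trace_mul_cycle]
  have h1 : (star (hA.eigenvectorUnitary : Matrix m m ℝ)) * (hA.eigenvectorUnitary : Matrix m m ℝ)
      = 1 := Unitary.coe_star_mul_self _
  rw [h1, Matrix.one_mul, Matrix.trace_diagonal]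
  simp

lemma aux_posDef_of_posSemidef_isUnit {A : Matrix m m ℝ} (hA : A.PosSemidef)
    (h : IsUnit A.det) : A.PosDef := by
  refine PosDef.of_dotProduct_mulVec_pos hA.1 (fun v hv => ?_)
  rcases lt_or_eq_of_le (hA.dotProduct_mulVec_nonneg v) with h1 | h1
  · exact h1
  · exfalso
    have h2 : A *ᵥ v = 0 := (hA.dotProduct_mulVec_zero_iff v).mp h1.symm
    have hinj : Function.Injective A.mulVec :=
      Matrix.mulVec_injective_iff_isUnit.mpr ((Matrix.isUnit_iff_isUnit_det A).mpr h)
    exact hv (hinj (by rw [h2, Matrix.mulVec_zero]))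

lemma aux_log_det_le {A : Matrix m m ℝ} (hA : A.PosDef) :
    Real.log A.det ≤ A.trace - Fintype.card m := by
  have he := hA.eigenvalues_pos
  rw [hA.isHermitian.det_eq_prod_eigenvalues, aux_trace_eq_sum_eigenvalues hA.isHermitian]
  simp only [RCLike.ofReal_real_eq_id, id_eq]
  rw [Real.log_prod (fun i _ => (he i).ne')]
  have : (Fintype.card m : ℝ) = ∑ _i : m, (1 : ℝ) := by simp
  rw [this, ← Finset.sum_sub_distrib]
  exact Finset.sum_le_sum fun i _ => Real.log_le_sub_one_of_pos (he i)

open scoped MatrixOrder in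
lemma aux_log_det_le_log_det {A B : Matrix m m ℝ} (hA : A.PosDef) (hB : B.PosDef) :
    Real.log B.det ≤ Real.log A.det + (A⁻¹ * B).trace - Fintype.card m := by
  set S := CFC.sqrt A with hSdef
  have hS : S.PosSemidef := (CFC.sqrt_nonneg A).posSemidef
  have hSS : S * S = A := CFC.sqrt_mul_sqrt_self A hA.posSemidef.nonneg
  have hdetS : S.det * S.det = A.det := by rw [← Matrix.det_mul, hSS]
  have hdetSne : S.det ≠ 0 := by
    intro h; rw [h, mul_zero] at hdetS; exact hA.det_pos.ne hdetS
  have hSD : S.PosDef := aux_posDef_of_posSemidef_isUnit hS (isUnit_iff_ne_zero.mpr hdetSne)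
  have hSiD : (S⁻¹).PosDef := hSD.inv
  have hSiH : (S⁻¹)ᴴ = S⁻¹ := hSiD.isHermitian
  have hMpsd : (S⁻¹ * B * S⁻¹).PosSemidef := by
    have := hB.posSemidef.conjTranspose_mul_mul_same (S⁻¹)
    rwa [hSiH] at this
  have hSiSi : S⁻¹ * S⁻¹ = A⁻¹ := by rw [← Matrix.mul_inv_rev, hSS]
  have hdetSi : (S⁻¹).det = (S.det)⁻¹ := by
    rw [Matrix.det_nonsing_inv, Ring.inverse_eq_inv']
  have hdetM : (S⁻¹ * B * S⁻¹).det = B.det / A.det := by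
    rw [Matrix.det_mul, Matrix.det_mul, hdetSi, ← hdetS]
    field_simp
  have hMdetpos : 0 < (S⁻¹ * B * S⁻¹).det := by
    rw [hdetM]; exact div_pos hB.det_pos hA.det_pos
  have hMpd : (S⁻¹ * B * S⁻¹).PosDef :=
    aux_posDef_of_posSemidef_isUnit hMpsd (isUnit_iff_ne_zero.mpr hMdetpos.ne')
  have htr : (S⁻¹ * B * S⁻¹).trace = (A⁻¹ * B).trace := by
    rw [Matrix.trace_mul_comm, ← Matrix.mul_assoc, hSiSi]
  have := aux_log_det_le hMpd
  rw [htr, hdetM, Real.log_div hB.det_pos.ne' hA.det_pos.ne'] at this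
  linarith

lemma aux_sum_mulVec {ι : Type*} (s : Finset ι) (M : ι → Matrix m m ℝ) (v : m → ℝ) :
    (∑ k ∈ s, M k) *ᵥ v = ∑ k ∈ s, M k *ᵥ v := by
  funext i
  simp only [Matrix.mulVec, dotProduct, Finset.sum_apply, Matrix.sum_apply,
    Finset.sum_mul]
  exact Finset.sum_comm

lemma aux_vecMulVec_mulVec (a b v : m → ℝ) :
    Matrix.vecMulVec a b *ᵥ v = (b ⬝ᵥ v) • a := by
  funext i
  simp only [Matrix.mulVec, dotProduct, Matrix.vecMulVec_apply, Pi.smul_apply,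
    smul_eq_mul, Finset.sum_mul]
  exact Finset.sum_congr rfl fun j _ => by ring

lemma aux_trace_mul_vecMulVec (W : Matrix m m ℝ) (a b : m → ℝ) :
    (W * Matrix.vecMulVec a b).trace = b ⬝ᵥ (W *ᵥ a) := by
  simp only [Matrix.trace, Matrix.diag, Matrix.mul_apply, Matrix.vecMulVec_apply,
    dotProduct, Matrix.mulVec, Finset.mul_sum]
  exact Finset.sum_congr rfl fun j _ => Finset.sum_congr rfl fun k _ => by ring

lemma aux_sum_smul_dotProduct {ι : Type*} (s : Finset ι) (c : ι → ℝ) (u : ι → m → ℝ)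
    (w : m → ℝ) : (∑ i ∈ s, c i • u i) ⬝ᵥ w = ∑ i ∈ s, c i * (u i ⬝ᵥ w) := by
  simp only [dotProduct, Finset.sum_apply, Pi.smul_apply, smul_eq_mul,
    Finset.sum_mul, Finset.mul_sum]
  rw [Finset.sum_comm]
  exact Finset.sum_congr rfl fun j _ => Finset.sum_congr rfl fun i _ => by ring

lemma aux_dotProduct_sum_smul {ι : Type*} (s : Finset ι) (c : ι → ℝ) (u : ι → m → ℝ)
    (w : m → ℝ) : w ⬝ᵥ (∑ i ∈ s, c i • u i) = ∑ i ∈ s, c i * (w ⬝ᵥ u i) := by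
  simp only [dotProduct, Finset.sum_apply, Pi.smul_apply, smul_eq_mul,
    Finset.sum_mul, Finset.mul_sum]
  rw [Finset.sum_comm]
  exact Finset.sum_congr rfl fun j _ => Finset.sum_congr rfl fun i _ => by ring

end Helpers

section Design

lemma Hmat_quadform {q n : ℕ} (t : ℝ) (x : Fin n → Fin q → ℝ) (p : Fin n → ℝ) (v : Fin q → ℝ) :
    v ⬝ᵥ (Hmat t x p *ᵥ v)
      = (∑ i, p i * (x i ⬝ᵥ v) ^ 2) - t * (gvec x p ⬝ᵥ v) ^ 2 := by
  have h1 : ∀ i : Fin n, (p i • Matrix.vecMulVec (x i) (x i)) *ᵥ v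
      = (p i * (x i ⬝ᵥ v)) • x i := fun i => by
    rw [smul_mulVec, aux_vecMulVec_mulVec, smul_smul]
  rw [Hmat, sub_mulVec, dotProduct_sub, smul_mulVec, dotProduct_smul,
    aux_vecMulVec_mulVec, dotProduct_smul, smul_eq_mul, smul_eq_mul, Gmat, aux_sum_mulVec]
  rw [Finset.sum_congr rfl fun i _ => h1 i, aux_dotProduct_sum_smul]
  have h2 : ∀ i : Fin n, p i * (x i ⬝ᵥ v) * (v ⬝ᵥ x i) = p i * (x i ⬝ᵥ v) ^ 2 := fun i => by
    rw [dotProduct_comm]; ring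
  rw [Finset.sum_congr rfl fun i _ => h2 i]
  rw [dotProduct_comm v (gvec x p)]
  ring

lemma Hmat_posSemidef {q n : ℕ} {t : ℝ} (ht0 : 0 ≤ t) (ht1 : t ≤ 1)
    (x : Fin n → Fin q → ℝ) {p : Fin n → ℝ} (hp : designMeasure p) :
    (Hmat t x p).PosSemidef := by
  refine PosSemidef.of_dotProduct_mulVec_nonneg ?_ ?_
  · refine Matrix.ext fun i j => ?_
    have happ : ∀ a b, Hmat t x p a b
        = (∑ k, p k * (x k a * x k b)) - t * (gvec x p a * gvec x p b) := fun a b => by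
      simp [Hmat, Gmat, Matrix.sub_apply, Matrix.sum_apply, Matrix.smul_apply,
        Matrix.vecMulVec_apply, smul_eq_mul]
    rw [Matrix.conjTranspose_apply, star_trivial, happ, happ]
    congr 1
    · exact Finset.sum_congr rfl fun k _ => by ring
    · ring
  · intro v
    have hsv : star v = v := funext fun i => star_trivial _
    rw [hsv, Hmat_quadform]
    set a : Fin n → ℝ := fun i => x i ⬝ᵥ v with ha
    have hgv : gvec x p ⬝ᵥ v = ∑ i, p i * a i := by
      rw [gvec, aux_sum_smul_dotProduct]
    rw [hgv]
    have hcs : (∑ i, p i * a i) ^ 2 ≤ ∑ i, p i * a i ^ 2 := by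
      have := Finset.sum_mul_sq_le_sq_mul_sq Finset.univ
        (fun i => Real.sqrt (p i)) (fun i => Real.sqrt (p i) * a i)
      have e1 : ∀ i : Fin n, Real.sqrt (p i) * (Real.sqrt (p i) * a i) = p i * a i := fun i => by
        rw [← mul_assoc, Real.mul_self_sqrt (hp.1 i)]
      have e2 : ∀ i : Fin n, Real.sqrt (p i) ^ 2 = p i := fun i => Real.sq_sqrt (hp.1 i)
      have e3 : ∀ i : Fin n, (Real.sqrt (p i) * a i) ^ 2 = p i * a i ^ 2 := fun i => by
        rw [mul_pow, e2]
      rw [Finset.sum_congr rfl fun i _ => e1 i] at this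
      rw [Finset.sum_congr rfl fun i _ => e2 i] at this
      rw [Finset.sum_congr rfl fun i _ => e3 i] at this
      rwa [hp.2, one_mul] at this
    have hsq : 0 ≤ (∑ i, p i * a i) ^ 2 := sq_nonneg _
    nlinarith [hcs, hsq]

lemma trace_le_sum_psi {q n : ℕ} {t : ℝ} (ht0 : 0 ≤ t)
    (x : Fin n → Fin q → ℝ) (phat p : Fin n → ℝ) (hp : designMeasure p)
    (hphat : designMeasure phat)
    (hW : ((Hmat t x phat)⁻¹).PosSemidef) :
    ((Hmat t x phat)⁻¹ * Hmat t x p).trace ≤ ∑ i, p i * psiD t x phat i := by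
  set W := (Hmat t x phat)⁻¹ with hWdef
  set g := gvec x p with hgdef
  set gh := gvec x phat with hghdef
  -- linearity facts
  have Qlin1 : ∀ w : Fin q → ℝ, ∑ i, p i * (x i ⬝ᵥ (W *ᵥ w)) = g ⬝ᵥ (W *ᵥ w) := fun w => by
    rw [hgdef, gvec, aux_sum_smul_dotProduct]
  have Qlin2 : ∀ w : Fin q → ℝ, ∑ i, p i * (w ⬝ᵥ (W *ᵥ x i)) = w ⬝ᵥ (W *ᵥ g) := fun w => by
    have : W *ᵥ g = ∑ i, p i • (W *ᵥ x i) := by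
      rw [hgdef, gvec]
      funext j
      simp only [Matrix.mulVec, dotProduct, Finset.sum_apply, Pi.smul_apply,
        smul_eq_mul, Finset.mul_sum]
      rw [Finset.sum_comm]
      exact Finset.sum_congr rfl fun a _ => Finset.sum_congr rfl fun b _ => by ring
    rw [this, aux_dotProduct_sum_smul]
  -- trace computation
  have htrace : (W * Hmat t x p).trace
      = (∑ i, p i * (x i ⬝ᵥ (W *ᵥ x i))) - t * (g ⬝ᵥ (W *ᵥ g)) := by
    rw [Hmat, mul_sub, Matrix.trace_sub, Gmat, Finset.mul_sum]
    have e1 : ∀ i : Fin n, W * (p i • Matrix.vecMulVec (x i) (x i))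
        = p i • (W * Matrix.vecMulVec (x i) (x i)) := fun i => mul_smul_comm _ _ _
    rw [Finset.sum_congr rfl fun i _ => e1 i, Matrix.trace_sum]
    have e2 : ∀ i : Fin n, (p i • (W * Matrix.vecMulVec (x i) (x i))).trace
        = p i * (x i ⬝ᵥ (W *ᵥ x i)) := fun i => by
      rw [Matrix.trace_smul, aux_trace_mul_vecMulVec, smul_eq_mul]
    rw [Finset.sum_congr rfl fun i _ => e2 i, mul_smul_comm, Matrix.trace_smul,
      aux_trace_mul_vecMulVec, smul_eq_mul]
  -- psi sum computation
  have hpsi : ∑ i, p i * psiD t x phat i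
      = (∑ i, p i * (x i ⬝ᵥ (W *ᵥ x i)))
        - t * (g ⬝ᵥ (W *ᵥ gh)) - t * (gh ⬝ᵥ (W *ᵥ g)) + t * (gh ⬝ᵥ (W *ᵥ gh)) := by
    have expand : ∀ i : Fin n, p i * psiD t x phat i
        = p i * (x i ⬝ᵥ (W *ᵥ x i)) - t * (p i * (x i ⬝ᵥ (W *ᵥ gh)))
          - t * (p i * (gh ⬝ᵥ (W *ᵥ x i))) + t * (p i * (gh ⬝ᵥ (W *ᵥ gh))) := fun i => by
      rw [psiD, ← hWdef, ← hghdef, mulVec_sub, dotProduct_sub, sub_dotProduct, sub_dotProduct]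
      ring
    rw [Finset.sum_congr rfl fun i _ => expand i]
    rw [Finset.sum_add_distrib, Finset.sum_sub_distrib, Finset.sum_sub_distrib,
      ← Finset.mul_sum, ← Finset.mul_sum, ← Finset.mul_sum, Qlin1, Qlin2,
      ← Finset.sum_mul, hp.2, one_mul]
  have hst : star (g - gh) = g - gh := funext fun i => star_trivial _
  have hpos : 0 ≤ (g - gh) ⬝ᵥ (W *ᵥ (g - gh)) := by
    have h0 := hW.dotProduct_mulVec_nonneg (g - gh)
    rwa [hst] at h0
  have hexp : (g - gh) ⬝ᵥ (W *ᵥ (g - gh))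
      = g ⬝ᵥ (W *ᵥ g) - g ⬝ᵥ (W *ᵥ gh) - gh ⬝ᵥ (W *ᵥ g) + gh ⬝ᵥ (W *ᵥ gh) := by
    rw [mulVec_sub, dotProduct_sub, sub_dotProduct, sub_dotProduct]
    ring
  have h4 : 0 ≤ t * (g ⬝ᵥ (W *ᵥ g) - g ⬝ᵥ (W *ᵥ gh) - gh ⬝ᵥ (W *ᵥ g) + gh ⬝ᵥ (W *ᵥ gh)) :=
    mul_nonneg ht0 (hexp ▸ hpos)
  rw [htrace, hpsi]
  nlinarith [h4]

end Design
end


theorem statement_7 {q n : ℕ} (hq : 1 ≤ q) (hn : 1 ≤ n)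
    (x : Fin n → Fin q → ℝ) (t : ℝ) (ht0 : 0 ≤ t) (ht1 : t < 1)
    (δ : ℝ) (hδ : 0 < δ)
    (phat : Fin n → ℝ) (hphat : designMeasure phat)
    (hHphat : IsUnit (Hmat t x phat).det)
    (hψ : ∀ i, psiD t x phat i - q ≤ δ) :
    ∀ p : Fin n → ℝ, designMeasure p → IsUnit (Hmat t x p).det →
      Real.log (Hmat t x phat).det ≥ Real.log (Hmat t x p).det - δ := by
  intro p hp hHp
  have hApsd := Hmat_posSemidef ht0 ht1.le x hphat
  have hApd : (Hmat t x phat).PosDef := aux_posDef_of_posSemidef_isUnit hApsd hHphat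
  have hBpd : (Hmat t x p).PosDef :=
    aux_posDef_of_posSemidef_isUnit (Hmat_posSemidef ht0 ht1.le x hp) hHp
  have hmain := aux_log_det_le_log_det hApd hBpd
  have hW : ((Hmat t x phat)⁻¹).PosSemidef := hApd.inv.posSemidef
  have htr1 := trace_le_sum_psi ht0 x phat p hp hphat hW
  have htr2 : ∑ i, p i * psiD t x phat i ≤ (q : ℝ) + δ := by
    calc ∑ i, p i * psiD t x phat i ≤ ∑ i, p i * ((q : ℝ) + δ) :=
          Finset.sum_le_sum fun i _ =>
            mul_le_mul_of_nonneg_left (by linarith [hψ i]) (hp.1 i)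
      _ = (q : ℝ) + δ := by rw [← Finset.sum_mul, hp.2, one_mul]
  have hcard : (Fintype.card (Fin q) : ℝ) = (q : ℝ) := by simp
  rw [hcard] at hmain
  linarith
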